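/- Let z₁, z₂ be standard Gaussians with correlation ρ ∈ (−1,1), and let a, b ∈ ℝ. With T₁ = exp(−a²/2)·Φ((ρa−b)/√(1−ρ²)) and T₂ = exp(−b²/2)·Φ((ρb−a)/√(1−ρ²)), one has E[z₁z₂ · 1{z₁ ≥ a, z₂ ≥ b}] = (√(1−ρ²)/(2π))·exp(−(a² − 2ρab + b²)/(2(1−ρ²))) + ρ·Φ₂(−a, −b, ρ) + (ρ/√(2π))·(a T₁ + b T₂). -/

import Mathlib

open MeasureTheory Real

/-- The standard normal probability density function. -/
noncomputable def stdGaussianPDF (t : ℝ) : ℝ :=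
  (Real.sqrt (2 * Real.pi))⁻¹ * Real.exp (-t ^ 2 / 2)

/-- The standard normal cumulative distribution function. -/
noncomputable def stdNormalCDF (x : ℝ) : ℝ :=
  ∫ t in Set.Iic x, stdGaussianPDF t

/-- Density of the bivariate standard Gaussian with correlation `ρ`. -/
noncomputable def bivStdGaussianPDF (ρ x y : ℝ) : ℝ :=
  (2 * Real.pi * Real.sqrt (1 - ρ ^ 2))⁻¹ *
    Real.exp (-(x ^ 2 - 2 * ρ * x * y + y ^ 2) / (2 * (1 - ρ ^ 2)))

/-- Joint CDF of the bivariate standard Gaussian with correlation `ρ`. -/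
noncomputable def bivStdNormalCDF (a b ρ : ℝ) : ℝ :=
  ∫ p in Set.Iic a ×ˢ Set.Iic b, bivStdGaussianPDF ρ p.1 p.2

open Set Filter




lemma stdGaussianPDF_neg (t : ℝ) : stdGaussianPDF (-t) = stdGaussianPDF t := by
  simp [stdGaussianPDF, neg_sq]

lemma continuous_stdGaussianPDF : Continuous stdGaussianPDF := by
  unfold stdGaussianPDF; fun_prop

lemma stdGaussianPDF_nonneg (t : ℝ) : 0 ≤ stdGaussianPDF t := by
  unfold stdGaussianPDF; positivity

lemma integrable_pow_gauss (n : ℕ) {k : ℝ} (hk : 0 < k) :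
    Integrable (fun x : ℝ => x ^ n * Real.exp (-k * x ^ 2)) := by
  have h := integrable_rpow_mul_exp_neg_mul_sq hk (s := (n : ℝ)) (by exact_mod_cast lt_of_lt_of_le (by norm_num : (-1:ℝ)<0) (Nat.cast_nonneg n))
  have : (fun x : ℝ => x ^ (n : ℝ) * Real.exp (-k * x ^ 2)) =
      fun x : ℝ => x ^ n * Real.exp (-k * x ^ 2) := by
    funext x; rw [Real.rpow_natCast]
  rwa [this] at h

lemma integrable_abs_pow_gauss (n : ℕ) {k : ℝ} (hk : 0 < k) :
    Integrable (fun x : ℝ => |x| ^ n * Real.exp (-k * x ^ 2)) := by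
  have h := (integrable_pow_gauss n hk).abs
  have : (fun x : ℝ => |x ^ n * Real.exp (-k * x ^ 2)|) =
      fun x : ℝ => |x| ^ n * Real.exp (-k * x ^ 2) := by
    funext x
    rw [abs_mul, abs_pow, abs_of_nonneg (Real.exp_nonneg _)]
  rwa [this] at h

lemma gauss_exp_eq (t : ℝ) : Real.exp (-t ^ 2 / 2) = Real.exp (-(1/2 : ℝ) * t ^ 2) := by
  ring_nf

lemma integrable_stdGaussianPDF : Integrable stdGaussianPDF := by
  have h := (integrable_pow_gauss 0 (k := (1/2:ℝ)) (by norm_num)).const_mul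
      ((Real.sqrt (2 * Real.pi))⁻¹)
  refine h.congr (Eventually.of_forall fun x => ?_)
  simp [stdGaussianPDF, gauss_exp_eq]

lemma integrable_id_mul_stdGaussianPDF : Integrable (fun t : ℝ => t * stdGaussianPDF t) := by
  have h := (integrable_pow_gauss 1 (k := (1/2:ℝ)) (by norm_num)).const_mul
      ((Real.sqrt (2 * Real.pi))⁻¹)
  refine h.congr (Eventually.of_forall fun x => ?_)
  simp [stdGaussianPDF, gauss_exp_eq]; ring

lemma integral_stdGaussianPDF : ∫ t, stdGaussianPDF t = 1 := by
  have h : ∫ t : ℝ, Real.exp (-(1/2 : ℝ) * t ^ 2) = Real.sqrt (Real.pi / (1/2)) :=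
    integral_gaussian (1/2)
  simp only [stdGaussianPDF]
  rw [MeasureTheory.integral_const_mul]
  have e : (fun t : ℝ => Real.exp (-t ^ 2 / 2)) = fun t : ℝ => Real.exp (-(1/2 : ℝ) * t ^ 2) := by
    funext t; exact gauss_exp_eq t
  rw [e, h]
  rw [inv_mul_eq_one₀ (by positivity)]
  rw [show Real.pi / (1/2 : ℝ) = 2 * Real.pi by ring]


section P2
variable (f : ℝ → ℝ)

lemma integral_comp_sub_right_Ioi (c m : ℝ) :
    ∫ x in Ioi c, f (x - m) = ∫ x in Ioi (c - m), f x := by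
  rw [← integral_indicator measurableSet_Ioi, ← integral_indicator measurableSet_Ioi,
    ← integral_sub_right_eq_self (fun x => (Ioi (c - m)).indicator f x) m]
  congr 1
  funext x
  by_cases h : x ∈ Ioi c
  · rw [indicator_of_mem h, indicator_of_mem (by simpa using sub_lt_sub_right h m)]
  · rw [indicator_of_notMem h, indicator_of_notMem (by
      simp only [mem_Ioi, not_lt] at h ⊢; exact sub_le_sub_right h m)]

lemma integral_comp_affine_Ioi (c m : ℝ) {s : ℝ} (hs : 0 < s) :
    ∫ x in Ioi c, f ((x - m) / s) = s * ∫ u in Ioi ((c - m) / s), f u := by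
  rw [integral_comp_sub_right_Ioi (fun y => f (y / s)) c m]
  simp_rw [div_eq_mul_inv]
  rw [integral_comp_mul_right_Ioi f _ (inv_pos.mpr hs)]
  simp [smul_eq_mul, inv_inv]

end P2

-- Part 3: half-line Gaussian integrals and CDF facts
lemma int_phi_Ioi (c : ℝ) : ∫ t in Ioi c, stdGaussianPDF t = stdNormalCDF (-c) := by
  rw [stdNormalCDF, ← integral_comp_neg_Ioi]
  exact setIntegral_congr_fun measurableSet_Ioi fun x _ => (stdGaussianPDF_neg x).symm

lemma stdNormalCDF_nonneg (x : ℝ) : 0 ≤ stdNormalCDF x :=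
  setIntegral_nonneg measurableSet_Iic fun t _ => stdGaussianPDF_nonneg t

lemma stdNormalCDF_le_one (x : ℝ) : stdNormalCDF x ≤ 1 := by
  rw [← integral_stdGaussianPDF, stdNormalCDF]
  exact setIntegral_le_integral integrable_stdGaussianPDF
    (Eventually.of_forall fun t => stdGaussianPDF_nonneg t)

lemma hasDerivAt_neg_phi (t : ℝ) :
    HasDerivAt (fun u : ℝ => -stdGaussianPDF u) (t * stdGaussianPDF t) t := by
  have h1 : HasDerivAt (fun u : ℝ => -u ^ 2 / 2) (-t) t := by
    have := (hasDerivAt_pow 2 t).neg.div_const 2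
    simpa using this.congr_deriv (by push_cast; ring)
  have h2 := (h1.exp.const_mul ((Real.sqrt (2 * Real.pi))⁻¹)).neg
  refine h2.congr_deriv ?_
  simp [stdGaussianPDF]; ring

lemma tendsto_phi_atTop : Tendsto stdGaussianPDF atTop (nhds 0) := by
  have h : Tendsto (fun t : ℝ => Real.exp (-t ^ 2 / 2)) atTop (nhds 0) := by
    apply Real.tendsto_exp_atBot.comp
    have ht : Tendsto (fun t : ℝ => t ^ 2) atTop atTop := tendsto_pow_atTop (by norm_num)
    have h2 : Tendsto (fun t : ℝ => -(t ^ 2)) atTop atBot := tendsto_neg_atBot_iff.mpr ht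
    have h3 := h2.atBot_div_const (r := (2:ℝ)) (by norm_num)
    refine h3.congr (fun t => by ring)
  have := h.const_mul ((Real.sqrt (2 * Real.pi))⁻¹)
  rw [mul_zero] at this; exact this

lemma int_id_phi_Ioi (c : ℝ) :
    ∫ t in Ioi c, t * stdGaussianPDF t = stdGaussianPDF c := by
  have h := integral_Ioi_of_hasDerivAt_of_tendsto' (f := fun u => -stdGaussianPDF u)
    (f' := fun t => t * stdGaussianPDF t) (a := c)
    (fun x _ => hasDerivAt_neg_phi x)
    (integrable_id_mul_stdGaussianPDF.integrableOn)
    (by simpa using tendsto_phi_atTop.neg)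
  simpa using h

-- Part 4: inner integrals by affine substitution
lemma inner_mass (b m : ℝ) {s : ℝ} (hs : 0 < s) :
    ∫ y in Ioi b, s⁻¹ * stdGaussianPDF ((y - m) / s) = stdNormalCDF ((m - b) / s) := by
  have h := integral_comp_affine_Ioi (fun u => s⁻¹ * stdGaussianPDF u) b m hs
  rw [h, integral_const_mul, int_phi_Ioi, show -((b - m) / s) = (m - b) / s by ring]
  field_simp

lemma inner_moment (b m : ℝ) {s : ℝ} (hs : 0 < s) :
    ∫ y in Ioi b, y * (s⁻¹ * stdGaussianPDF ((y - m) / s)) =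
      m * stdNormalCDF ((m - b) / s) + s * stdGaussianPDF ((b - m) / s) := by
  have h := integral_comp_affine_Ioi (fun u => (m + s * u) * (s⁻¹ * stdGaussianPDF u)) b m hs
  have key : ∀ y : ℝ, (m + s * ((y - m) / s)) * (s⁻¹ * stdGaussianPDF ((y - m) / s)) =
      y * (s⁻¹ * stdGaussianPDF ((y - m) / s)) := by
    intro y
    have : m + s * ((y - m) / s) = y := by field_simp; ring
    rw [this]
  rw [setIntegral_congr_fun measurableSet_Ioi (fun y _ => (key y).symm), h]
  have expand : ∀ u : ℝ, (m + s * u) * (s⁻¹ * stdGaussianPDF u) =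
      (m * s⁻¹) * stdGaussianPDF u + u * stdGaussianPDF u := fun u => by
    field_simp
  rw [setIntegral_congr_fun measurableSet_Ioi (fun u _ => expand u), integral_add
    ((integrable_stdGaussianPDF.const_mul _).integrableOn)
    (integrable_id_mul_stdGaussianPDF.integrableOn)]
  rw [integral_const_mul, int_phi_Ioi, int_id_phi_Ioi,
    show -((b - m) / s) = (m - b) / s by ring]
  field_simp

-- Part 5: derivative of CDF; decay of x * phi
lemma hasDerivAt_stdNormalCDF (x : ℝ) :
    HasDerivAt stdNormalCDF (stdGaussianPDF x) x := by
  have key : ∀ u : ℝ, stdNormalCDF u = stdNormalCDF 0 + ∫ t in (0:ℝ)..u, stdGaussianPDF t := by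
    intro u
    rw [stdNormalCDF, stdNormalCDF, ← intervalIntegral.integral_Iic_sub_Iic
      integrable_stdGaussianPDF.integrableOn integrable_stdGaussianPDF.integrableOn]
    ring
  have hD : HasDerivAt (fun u => stdNormalCDF 0 + ∫ t in (0:ℝ)..u, stdGaussianPDF t)
      (stdGaussianPDF x) x := by
    refine (HasDerivAt.const_add _ ?_)
    exact intervalIntegral.integral_hasDerivAt_right
      (integrable_stdGaussianPDF.intervalIntegrable)
      (continuous_stdGaussianPDF.aestronglyMeasurable.stronglyMeasurableAtFilter)
      (continuous_stdGaussianPDF.continuousAt)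
  exact hD.congr_of_eventuallyEq (Eventually.of_forall key)

lemma tendsto_id_mul_phi_atTop :
    Tendsto (fun x : ℝ => x * stdGaussianPDF x) atTop (nhds 0) := by
  have hlo := rpow_mul_exp_neg_mul_sq_isLittleO_exp_neg (b := (1/2:ℝ)) (by norm_num) 1
  have h0 : Tendsto (fun x : ℝ => Real.exp (-(1/2 : ℝ) * x)) atTop (nhds 0) := by
    apply Real.tendsto_exp_atBot.comp
    have h1 : Tendsto (fun x : ℝ => (1/2 : ℝ) * x) atTop atTop :=
      (tendsto_id (α := ℝ)).const_mul_atTop (by norm_num)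
    exact (tendsto_neg_atBot_iff.mpr h1).congr (fun x => by ring)
  have hten : Tendsto (fun x : ℝ => x ^ (1:ℝ) * Real.exp (-(1/2:ℝ) * x ^ 2)) atTop (nhds 0) :=
    hlo.isBigO.trans_tendsto h0
  have := hten.const_mul ((Real.sqrt (2 * Real.pi))⁻¹)
  rw [mul_zero] at this
  refine this.congr' (Eventually.of_forall fun x => ?_)
  simp only [Real.rpow_one, stdGaussianPDF, gauss_exp_eq]
  ring



lemma bivStdGaussianPDF_nonneg {ρ : ℝ} (x y : ℝ) (h1 : 0 < 1 - ρ ^ 2) :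
    0 ≤ bivStdGaussianPDF ρ x y := by
  unfold bivStdGaussianPDF
  have : 0 < Real.sqrt (1 - ρ ^ 2) := Real.sqrt_pos.mpr h1
  positivity

lemma continuous_biv (ρ : ℝ) : Continuous (fun p : ℝ × ℝ => bivStdGaussianPDF ρ p.1 p.2) := by
  unfold bivStdGaussianPDF; fun_prop

lemma biv_factor {ρ : ℝ} (h1 : 0 < 1 - ρ ^ 2) (x y : ℝ) :
    bivStdGaussianPDF ρ x y = stdGaussianPDF x *
      ((Real.sqrt (1 - ρ ^ 2))⁻¹ *
        stdGaussianPDF ((y - ρ * x) / Real.sqrt (1 - ρ ^ 2))) := by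
  have hs : 0 < Real.sqrt (1 - ρ ^ 2) := Real.sqrt_pos.mpr h1
  have hs2 : Real.sqrt (1 - ρ ^ 2) ^ 2 = 1 - ρ ^ 2 := Real.sq_sqrt h1.le
  set s := Real.sqrt (1 - ρ ^ 2) with hsdef
  unfold bivStdGaussianPDF stdGaussianPDF
  have hexp : -(x ^ 2 - 2 * ρ * x * y + y ^ 2) / (2 * (1 - ρ ^ 2)) =
      -x ^ 2 / 2 + -((y - ρ * x) / s) ^ 2 / 2 := by
    rw [div_pow, hs2]
    field_simp
    ring
  have hconst : ((2 : ℝ) * Real.pi * s)⁻¹ = (Real.sqrt (2 * Real.pi))⁻¹ *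
      (s⁻¹ * (Real.sqrt (2 * Real.pi))⁻¹) := by
    rw [show (2 : ℝ) * Real.pi = Real.sqrt (2 * Real.pi) * Real.sqrt (2 * Real.pi) from
      (Real.mul_self_sqrt (by positivity)).symm]
    have h2 : (0:ℝ) < Real.sqrt (2 * Real.pi) := Real.sqrt_pos.mpr (by positivity)
    field_simp
    ring
    rw [Real.sqrt_sq (by positivity)]
  rw [hexp, Real.exp_add, hconst]
  ring

lemma integrable_biv_pow {ρ : ℝ} (hρ : ρ ∈ Set.Ioo (-1 : ℝ) 1) (n m : ℕ) :
    Integrable (fun p : ℝ × ℝ => p.1 ^ n * p.2 ^ m * bivStdGaussianPDF ρ p.1 p.2) := by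
  have h1 : 0 < 1 - ρ ^ 2 := by nlinarith [hρ.1, hρ.2]
  have habs : |ρ| < 1 := abs_lt.mpr ⟨hρ.1, hρ.2⟩
  set k := (1 - |ρ|) / (2 * (1 - ρ ^ 2)) with hkdef
  have hk : 0 < k := div_pos (by linarith) (by linarith)
  have hs : 0 < Real.sqrt (1 - ρ ^ 2) := Real.sqrt_pos.mpr h1
  set C := ((2 : ℝ) * Real.pi * Real.sqrt (1 - ρ ^ 2))⁻¹ with hCdef
  have hC : 0 ≤ C := by positivity
  have hg : Integrable (fun p : ℝ × ℝ =>
      (C * (|p.1| ^ n * Real.exp (-k * p.1 ^ 2))) * (|p.2| ^ m * Real.exp (-k * p.2 ^ 2))) := by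
    rw [MeasureTheory.Measure.volume_eq_prod]
    exact ((integrable_abs_pow_gauss n hk).const_mul C).mul_prod (integrable_abs_pow_gauss m hk)
  refine hg.mono' ?_ (Eventually.of_forall fun p => ?_)
  · exact ((continuous_fst.pow n).mul (continuous_snd.pow m)).mul
      (continuous_biv ρ) |>.aestronglyMeasurable
  · obtain ⟨x, y⟩ := p
    simp only [norm_mul, Real.norm_eq_abs, norm_pow]
    have hQ : 2 * (ρ * x * y) ≤ |ρ| * (x ^ 2 + y ^ 2) := by
      have e1 : 2 * |x| * |y| ≤ x ^ 2 + y ^ 2 := by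
        nlinarith [sq_nonneg (|x| - |y|), sq_abs x, sq_abs y]
      have e2 : ρ * x * y ≤ |ρ| * (|x| * |y|) := by
        calc ρ * x * y ≤ |ρ * x * y| := le_abs_self _
        _ = |ρ| * (|x| * |y|) := by rw [abs_mul, abs_mul]; ring
      nlinarith [abs_nonneg ρ, abs_nonneg x, abs_nonneg y]
    have hbound : bivStdGaussianPDF ρ x y ≤
        C * (Real.exp (-k * x ^ 2) * Real.exp (-k * y ^ 2)) := by
      unfold bivStdGaussianPDF
      rw [← hCdef]
      refine mul_le_mul_of_nonneg_left ?_ hC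
      rw [← Real.exp_add]
      apply Real.exp_le_exp.mpr
      have hrw : -k * x ^ 2 + -k * y ^ 2 = -((1 - |ρ|) * (x ^ 2 + y ^ 2)) / (2 * (1 - ρ ^ 2)) := by
        rw [hkdef]; field_simp; ring
      rw [hrw]
      apply div_le_div_of_nonneg_right (c := 2 * (1 - ρ ^ 2)) ?_ (by linarith)
      nlinarith [hQ]
    have hbn : |bivStdGaussianPDF ρ x y| = bivStdGaussianPDF ρ x y :=
      abs_of_nonneg (bivStdGaussianPDF_nonneg x y h1)
    rw [hbn]
    calc |x| ^ n * |y| ^ m * bivStdGaussianPDF ρ x y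
        ≤ |x| ^ n * |y| ^ m * (C * (Real.exp (-k * x ^ 2) * Real.exp (-k * y ^ 2))) := by
          refine mul_le_mul_of_nonneg_left hbound (by positivity)
      _ = C * (|x| ^ n * Real.exp (-k * x ^ 2)) * (|y| ^ m * Real.exp (-k * y ^ 2)) := by ring

-- Part 7: Fubini and inner evaluations
lemma inner_eval {ρ : ℝ} (h1 : 0 < 1 - ρ ^ 2) (b x : ℝ) :
    ∫ y in Ici b, x * y * bivStdGaussianPDF ρ x y =
      x * stdGaussianPDF x *
        (ρ * x * stdNormalCDF ((ρ * x - b) / Real.sqrt (1 - ρ ^ 2)) +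
          Real.sqrt (1 - ρ ^ 2) * stdGaussianPDF ((ρ * x - b) / Real.sqrt (1 - ρ ^ 2))) := by
  have hs : 0 < Real.sqrt (1 - ρ ^ 2) := Real.sqrt_pos.mpr h1
  set s := Real.sqrt (1 - ρ ^ 2) with hsdef
  rw [integral_Ici_eq_integral_Ioi]
  have step : ∀ y : ℝ, x * y * bivStdGaussianPDF ρ x y =
      (x * stdGaussianPDF x) * (y * (s⁻¹ * stdGaussianPDF ((y - ρ * x) / s))) := by
    intro y; rw [biv_factor h1 x y]; ring
  rw [setIntegral_congr_fun measurableSet_Ioi (fun y _ => step y), integral_const_mul,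
    inner_moment b (ρ * x) hs]
  have : stdGaussianPDF ((b - ρ * x) / s) = stdGaussianPDF ((ρ * x - b) / s) := by
    rw [show (b - ρ * x) / s = -((ρ * x - b) / s) by ring, stdGaussianPDF_neg]
  rw [this]

lemma main_fubini {ρ : ℝ} (hρ : ρ ∈ Set.Ioo (-1 : ℝ) 1) (a b : ℝ) :
    (∫ p in Set.Ici a ×ˢ Set.Ici b, p.1 * p.2 * bivStdGaussianPDF ρ p.1 p.2) =
      ∫ x in Ici a, ∫ y in Ici b, x * y * bivStdGaussianPDF ρ x y := by
  rw [MeasureTheory.Measure.volume_eq_prod]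
  exact setIntegral_prod _ (((integrable_biv_pow hρ 1 1).congr
    (Eventually.of_forall fun p => by simp)).integrableOn)

lemma biv_cdf_eval {ρ : ℝ} (hρ : ρ ∈ Set.Ioo (-1 : ℝ) 1) (a b : ℝ) :
    bivStdNormalCDF (-a) (-b) ρ =
      ∫ x in Ioi a, stdGaussianPDF x * stdNormalCDF ((ρ * x - b) / Real.sqrt (1 - ρ ^ 2)) := by
  have h1 : 0 < 1 - ρ ^ 2 := by nlinarith [hρ.1, hρ.2]
  have hs : 0 < Real.sqrt (1 - ρ ^ 2) := Real.sqrt_pos.mpr h1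
  set s := Real.sqrt (1 - ρ ^ 2) with hsdef
  rw [bivStdNormalCDF, MeasureTheory.Measure.volume_eq_prod,
    setIntegral_prod _ (((integrable_biv_pow hρ 0 0).congr
      (Eventually.of_forall fun p => by simp)).integrableOn)]
  have inner : ∀ x : ℝ, (∫ y in Iic (-b), bivStdGaussianPDF ρ x y) =
      stdGaussianPDF x * stdNormalCDF ((-(ρ * x) - b) / s) := by
    intro x
    rw [← integral_comp_neg_Ioi]
    have step : ∀ y : ℝ, bivStdGaussianPDF ρ x (-y) =
        stdGaussianPDF x * (s⁻¹ * stdGaussianPDF ((y - -(ρ * x)) / s)) := by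
      intro y
      rw [biv_factor h1 x (-y),
        show (-y - ρ * x) / s = -((y - -(ρ * x)) / s) by ring, stdGaussianPDF_neg]
    rw [setIntegral_congr_fun measurableSet_Ioi (fun y _ => step y), integral_const_mul,
      inner_mass b (-(ρ * x)) hs]
  rw [setIntegral_congr_fun measurableSet_Iic (fun x _ => inner x), ← integral_comp_neg_Ioi]
  refine setIntegral_congr_fun measurableSet_Ioi (fun x _ => ?_)
  rw [stdGaussianPDF_neg, show -(ρ * -x) - b = ρ * x - b by ring]

-- Part 8
lemma integrable_abspow_phi (n : ℕ) :
    Integrable (fun x : ℝ => |x| ^ n * stdGaussianPDF x) := by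
  have h := (integrable_abs_pow_gauss n (k := (1/2:ℝ)) (by norm_num)).const_mul
      ((Real.sqrt (2 * Real.pi))⁻¹)
  refine h.congr (Eventually.of_forall fun x => ?_)
  simp only [stdGaussianPDF, gauss_exp_eq]; ring

lemma phi_le (t : ℝ) : stdGaussianPDF t ≤ (Real.sqrt (2 * Real.pi))⁻¹ := by
  have h : Real.exp (-t ^ 2 / 2) ≤ 1 := by
    rw [Real.exp_le_one_iff]
    have : (0:ℝ) ≤ t ^ 2 / 2 := by positivity
    linarith
  calc stdGaussianPDF t = (Real.sqrt (2 * Real.pi))⁻¹ * Real.exp (-t ^ 2 / 2) := rfl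
    _ ≤ (Real.sqrt (2 * Real.pi))⁻¹ * 1 := by
        refine mul_le_mul_of_nonneg_left h (by positivity)
    _ = (Real.sqrt (2 * Real.pi))⁻¹ := mul_one _

lemma continuous_stdNormalCDF : Continuous stdNormalCDF :=
  continuous_iff_continuousAt.mpr fun x => (hasDerivAt_stdNormalCDF x).continuousAt

lemma abs_stdNormalCDF_le (x : ℝ) : |stdNormalCDF x| ≤ 1 :=
  abs_le.mpr ⟨by linarith [stdNormalCDF_nonneg x], stdNormalCDF_le_one x⟩

section Main
variable {ρ a b : ℝ}

lemma integrable_powphiPsi (hρ : ρ ∈ Set.Ioo (-1:ℝ) 1) (b : ℝ) (n : ℕ) :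
    Integrable (fun x : ℝ => x ^ n * stdGaussianPDF x *
      stdNormalCDF ((ρ * x - b) / Real.sqrt (1 - ρ ^ 2))) := by
  refine (integrable_abspow_phi n).mono' ?_ (Eventually.of_forall fun x => ?_)
  · exact (((continuous_id.pow n).mul continuous_stdGaussianPDF).mul
      (continuous_stdNormalCDF.comp (by fun_prop))).aestronglyMeasurable
  · rw [Real.norm_eq_abs, abs_mul, abs_mul, abs_pow,
      abs_of_nonneg (stdGaussianPDF_nonneg x)]
    calc |x| ^ n * stdGaussianPDF x * |stdNormalCDF ((ρ * x - b) / Real.sqrt (1 - ρ ^ 2))|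
        ≤ |x| ^ n * stdGaussianPDF x * 1 :=
          mul_le_mul_of_nonneg_left (abs_stdNormalCDF_le _)
            (by have := stdGaussianPDF_nonneg x; positivity)
      _ = |x| ^ n * stdGaussianPDF x := mul_one _

lemma integrable_xphiphi (b : ℝ) :
    Integrable (fun x : ℝ => x * stdGaussianPDF x *
      stdGaussianPDF ((ρ * x - b) / Real.sqrt (1 - ρ ^ 2))) := by
  refine ((integrable_abspow_phi 1).const_mul ((Real.sqrt (2 * Real.pi))⁻¹)).mono'
    ?_ (Eventually.of_forall fun x => ?_)
  · exact ((continuous_id.mul continuous_stdGaussianPDF).mul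
      (continuous_stdGaussianPDF.comp (by fun_prop))).aestronglyMeasurable
  · rw [Real.norm_eq_abs, abs_mul, abs_mul, abs_of_nonneg (stdGaussianPDF_nonneg x),
      abs_of_nonneg (stdGaussianPDF_nonneg _)]
    calc |x| * stdGaussianPDF x * stdGaussianPDF ((ρ * x - b) / Real.sqrt (1 - ρ ^ 2))
        ≤ |x| * stdGaussianPDF x * (Real.sqrt (2 * Real.pi))⁻¹ :=
          mul_le_mul_of_nonneg_left (phi_le _)
            (by have := stdGaussianPDF_nonneg x; positivity)
      _ = (Real.sqrt (2 * Real.pi))⁻¹ * (|x| ^ 1 * stdGaussianPDF x) := by ring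

lemma hasDerivAt_phi (x : ℝ) :
    HasDerivAt stdGaussianPDF (-(x * stdGaussianPDF x)) x := by
  exact (hasDerivAt_neg_phi x).neg.congr_of_eventuallyEq (Eventually.of_forall fun u => by simp)

lemma ftc_main (hρ : ρ ∈ Set.Ioo (-1:ℝ) 1) (a b : ℝ) :
    ∫ x in Ioi a, (x ^ 2 * stdGaussianPDF x *
        stdNormalCDF ((ρ * x - b) / Real.sqrt (1 - ρ ^ 2)) -
      stdGaussianPDF x * stdNormalCDF ((ρ * x - b) / Real.sqrt (1 - ρ ^ 2)) -
      (ρ / Real.sqrt (1 - ρ ^ 2)) * (x * stdGaussianPDF x *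
        stdGaussianPDF ((ρ * x - b) / Real.sqrt (1 - ρ ^ 2)))) =
      a * stdGaussianPDF a * stdNormalCDF ((ρ * a - b) / Real.sqrt (1 - ρ ^ 2)) := by
  have h1 : 0 < 1 - ρ ^ 2 := by nlinarith [hρ.1, hρ.2]
  have hs : 0 < Real.sqrt (1 - ρ ^ 2) := Real.sqrt_pos.mpr h1
  set s := Real.sqrt (1 - ρ ^ 2) with hsdef
  set F : ℝ → ℝ := fun x => -(x * stdGaussianPDF x * stdNormalCDF ((ρ * x - b) / s)) with hF
  have hderiv : ∀ x : ℝ, HasDerivAt F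
      (x ^ 2 * stdGaussianPDF x * stdNormalCDF ((ρ * x - b) / s) -
        stdGaussianPDF x * stdNormalCDF ((ρ * x - b) / s) -
        (ρ / s) * (x * stdGaussianPDF x * stdGaussianPDF ((ρ * x - b) / s))) x := by
    intro x
    have haff : HasDerivAt (fun x : ℝ => (ρ * x - b) / s) (ρ / s) x := by
      have := (((hasDerivAt_id x).const_mul ρ).sub_const b).div_const s
      simpa using this
    have hPsi : HasDerivAt (fun x : ℝ => stdNormalCDF ((ρ * x - b) / s))
        (stdGaussianPDF ((ρ * x - b) / s) * (ρ / s)) x :=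
      by have := (hasDerivAt_stdNormalCDF ((ρ * x - b) / s)).comp x haff; exact this
    have hxphi : HasDerivAt (fun x : ℝ => x * stdGaussianPDF x)
        (1 * stdGaussianPDF x + x * -(x * stdGaussianPDF x)) x :=
      (hasDerivAt_id x).mul (hasDerivAt_phi x)
    have := (hxphi.mul hPsi).neg
    refine this.congr_deriv ?_
    ring
  have htends : Filter.Tendsto F atTop (nhds 0) := by
    apply squeeze_zero_norm (a := fun x : ℝ => |x * stdGaussianPDF x|) ?_
      (by simpa using tendsto_id_mul_phi_atTop.abs)
    · intro x
      show ‖F x‖ ≤ _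
      rw [hF]
      rw [Real.norm_eq_abs, abs_neg, abs_mul]
      calc |x * stdGaussianPDF x| * |stdNormalCDF ((ρ * x - b) / s)|
          ≤ |x * stdGaussianPDF x| * 1 :=
            mul_le_mul_of_nonneg_left (abs_stdNormalCDF_le _) (abs_nonneg _)
        _ = |x * stdGaussianPDF x| := mul_one _
  have hint : IntegrableOn (fun x => x ^ 2 * stdGaussianPDF x *
        stdNormalCDF ((ρ * x - b) / s) -
      stdGaussianPDF x * stdNormalCDF ((ρ * x - b) / s) -
      (ρ / s) * (x * stdGaussianPDF x * stdGaussianPDF ((ρ * x - b) / s))) (Ioi a) := by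
    exact (((integrable_powphiPsi hρ b 2).sub
      ((integrable_powphiPsi hρ b 0).congr (Eventually.of_forall fun x => by
        simp [hsdef]))).sub
      ((integrable_xphiphi b).const_mul (ρ / s))).integrableOn
  have h := integral_Ioi_of_hasDerivAt_of_tendsto' (fun x _ => hderiv x) hint htends
  rw [h, hF]
  simp

lemma K_eval (hρ : ρ ∈ Set.Ioo (-1:ℝ) 1) (a b : ℝ) :
    ∫ x in Ioi a, x * stdGaussianPDF x *
        stdGaussianPDF ((ρ * x - b) / Real.sqrt (1 - ρ ^ 2)) =
      stdGaussianPDF b * Real.sqrt (1 - ρ ^ 2) *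
        (ρ * b * stdNormalCDF ((ρ * b - a) / Real.sqrt (1 - ρ ^ 2)) +
          Real.sqrt (1 - ρ ^ 2) * stdGaussianPDF ((a - ρ * b) / Real.sqrt (1 - ρ ^ 2))) := by
  have h1 : 0 < 1 - ρ ^ 2 := by nlinarith [hρ.1, hρ.2]
  have hs : 0 < Real.sqrt (1 - ρ ^ 2) := Real.sqrt_pos.mpr h1
  have hs2 : Real.sqrt (1 - ρ ^ 2) ^ 2 = 1 - ρ ^ 2 := Real.sq_sqrt h1.le
  set s := Real.sqrt (1 - ρ ^ 2) with hsdef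
  have phi_prod : ∀ x : ℝ, stdGaussianPDF x * stdGaussianPDF ((ρ * x - b) / s) =
      stdGaussianPDF b * stdGaussianPDF ((x - ρ * b) / s) := by
    intro x
    unfold stdGaussianPDF
    rw [mul_mul_mul_comm, ← Real.exp_add, mul_mul_mul_comm, ← Real.exp_add]
    congr 1
    rw [div_pow, div_pow, hs2]
    field_simp
    ring
  have step : ∀ x : ℝ, x * stdGaussianPDF x * stdGaussianPDF ((ρ * x - b) / s) =
      (stdGaussianPDF b * s) * (x * (s⁻¹ * stdGaussianPDF ((x - ρ * b) / s))) := by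
    intro x
    rw [show x * stdGaussianPDF x * stdGaussianPDF ((ρ * x - b) / s) =
      x * (stdGaussianPDF x * stdGaussianPDF ((ρ * x - b) / s)) by ring, phi_prod x]
    field_simp
  rw [setIntegral_congr_fun measurableSet_Ioi (fun x _ => step x), integral_const_mul,
    inner_moment a (ρ * b) hs]

end Main

/-- For a bivariate standard Gaussian `(z₁, z₂)` with correlation `ρ ∈ (−1,1)`:
`E[z₁ z₂ 1{z₁ ≥ a, z₂ ≥ b}] = (√(1−ρ²)/(2π)) exp(−(a² − 2ρab + b²)/(2(1−ρ²)))
  + ρ Φ₂(−a, −b, ρ) + (ρ/√(2π)) (a T₁ + b T₂)`. -/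
theorem product_truncated_bivariate (a b ρ : ℝ) (hρ : ρ ∈ Set.Ioo (-1 : ℝ) 1) :
    (∫ p in Set.Ici a ×ˢ Set.Ici b, p.1 * p.2 * bivStdGaussianPDF ρ p.1 p.2) =
      Real.sqrt (1 - ρ ^ 2) / (2 * Real.pi) *
          Real.exp (-(a ^ 2 - 2 * ρ * a * b + b ^ 2) / (2 * (1 - ρ ^ 2))) +
        ρ * bivStdNormalCDF (-a) (-b) ρ +
        ρ / Real.sqrt (2 * Real.pi) *
          (a * (Real.exp (-a ^ 2 / 2) * stdNormalCDF ((ρ * a - b) / Real.sqrt (1 - ρ ^ 2))) +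
            b * (Real.exp (-b ^ 2 / 2) *
              stdNormalCDF ((ρ * b - a) / Real.sqrt (1 - ρ ^ 2)))) := by
  have h1 : 0 < 1 - ρ ^ 2 := by nlinarith [hρ.1, hρ.2]
  have hs : 0 < Real.sqrt (1 - ρ ^ 2) := Real.sqrt_pos.mpr h1
  have hs2 : Real.sqrt (1 - ρ ^ 2) ^ 2 = 1 - ρ ^ 2 := Real.sq_sqrt h1.le
  set s := Real.sqrt (1 - ρ ^ 2) with hsdef
  have hA := integrable_powphiPsi (ρ := ρ) hρ b 2
  have hB : Integrable (fun x : ℝ => stdGaussianPDF x * stdNormalCDF ((ρ * x - b) / s)) :=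
    (integrable_powphiPsi (ρ := ρ) hρ b 0).congr (Filter.Eventually.of_forall fun x => by simp [hsdef])
  have hC := integrable_xphiphi (ρ := ρ) b
  rw [main_fubini hρ a b,
    setIntegral_congr_fun measurableSet_Ici (fun x _ => inner_eval h1 b x),
    integral_Ici_eq_integral_Ioi,
    setIntegral_congr_fun measurableSet_Ioi (fun x _ => show
      x * stdGaussianPDF x * (ρ * x * stdNormalCDF ((ρ * x - b) / s) +
        s * stdGaussianPDF ((ρ * x - b) / s)) =
      ρ * (x ^ 2 * stdGaussianPDF x * stdNormalCDF ((ρ * x - b) / s)) +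
        s * (x * stdGaussianPDF x * stdGaussianPDF ((ρ * x - b) / s)) by ring),
    integral_add ((hA.const_mul ρ).integrableOn) ((hC.const_mul s).integrableOn),
    integral_const_mul, integral_const_mul]
  have hI2 : (∫ x in Ioi a, x ^ 2 * stdGaussianPDF x * stdNormalCDF ((ρ * x - b) / s)) =
      a * stdGaussianPDF a * stdNormalCDF ((ρ * a - b) / s) +
        (∫ x in Ioi a, stdGaussianPDF x * stdNormalCDF ((ρ * x - b) / s)) +
        (ρ / s) * ∫ x in Ioi a, x * stdGaussianPDF x * stdGaussianPDF ((ρ * x - b) / s) := by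
    have h := ftc_main hρ a b
    have hAB : Integrable (fun x : ℝ => x ^ 2 * stdGaussianPDF x *
        stdNormalCDF ((ρ * x - b) / s) -
        stdGaussianPDF x * stdNormalCDF ((ρ * x - b) / s)) := hA.sub hB
    rw [integral_sub hAB.integrableOn ((hC.const_mul (ρ / s)).integrableOn),
      integral_sub hA.integrableOn hB.integrableOn, integral_const_mul] at h
    linarith
  rw [hI2, ← biv_cdf_eval hρ a b, K_eval hρ a b]
  -- now pure algebra
  have hea : Real.exp (-a ^ 2 / 2) = Real.sqrt (2 * Real.pi) * stdGaussianPDF a := by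
    unfold stdGaussianPDF
    rw [← mul_assoc, mul_inv_cancel₀ (by positivity), one_mul]
  have heb : Real.exp (-b ^ 2 / 2) = Real.sqrt (2 * Real.pi) * stdGaussianPDF b := by
    unfold stdGaussianPDF
    rw [← mul_assoc, mul_inv_cancel₀ (by positivity), one_mul]
  have key' : stdGaussianPDF b * stdGaussianPDF ((a - ρ * b) / s) =
      (2 * Real.pi)⁻¹ * Real.exp (-(a ^ 2 - 2 * ρ * a * b + b ^ 2) / (2 * (1 - ρ ^ 2))) := by
    unfold stdGaussianPDF
    rw [mul_mul_mul_comm, ← Real.exp_add]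
    congr 1
    · rw [← mul_inv]
      congr 1
      exact Real.mul_self_sqrt (by positivity)
    · rw [div_pow, hs2]
      field_simp
      ring
  have key : Real.exp (-(a ^ 2 - 2 * ρ * a * b + b ^ 2) / (2 * (1 - ρ ^ 2))) =
      (2 * Real.pi) * (stdGaussianPDF b * stdGaussianPDF ((a - ρ * b) / s)) := by
    rw [key', ← mul_assoc, mul_inv_cancel₀ (by positivity), one_mul]
  rw [hea, heb, key]
  have hsum : ρ ^ 2 + s ^ 2 = 1 := by rw [hs2]; ring
  rw [← hsdef]
  set J := bivStdNormalCDF (-a) (-b) ρ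
  set P1 := stdNormalCDF ((ρ * a - b) / s)
  set P2 := stdNormalCDF ((ρ * b - a) / s)
  set pa := stdGaussianPDF a
  set pb := stdGaussianPDF b
  set pc := stdGaussianPDF ((a - ρ * b) / s)
  field_simp
  linear_combination ((ρ * s * b * P2 + s ^ 2 * pc) * (pb * Real.pi * Real.sqrt 2 * Real.sqrt Real.pi * 2) + (1 - s * (Real.pi * Real.sqrt 2 * Real.sqrt Real.pi * 2)) * (ρ * pb * b * P2 + pb * pc * s)) * hsum
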